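/- arXiv:1505.05622 — 2 statements merged into one kernel-verified Lean document; each statement's English description precedes it below -/
import Mathlib

section
/- Let p be a prime, let n ≥ 2, and let G be a finite non-abelian p-group such that Aut_{Z(G)}^{γ_n(G)}(G) = Autcent(G). Then γ_n(G) ⊆ Z(G) and d(γ_n(G)) = d(Z(G)), where d denotes the minimal number of generators. -/
/-- `Aut^M(G)`: automorphisms `f` of `G` with `g⁻¹ * f g ∈ M` for all `g`. -/
def autM {G : Type*} [Group G] (M : Subgroup G) : Subgroup (MulAut G) where
  carrier := {f | ∀ g : G, g⁻¹ * f g ∈ M}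
  one_mem' := by intro g; simpa using M.one_mem
  mul_mem' := by
    intro f₁ f₂ h₁ h₂ g
    have key : g⁻¹ * (f₁ * f₂) g = (g⁻¹ * f₂ g) * ((f₂ g)⁻¹ * f₁ (f₂ g)) := by
      rw [MulAut.mul_apply]; group
    rw [key]; exact M.mul_mem (h₂ g) (h₁ (f₂ g))
  inv_mem' := by
    intro f hf g
    have h := M.inv_mem (hf (f⁻¹ g))
    simpa [MulAut.apply_inv_self, mul_inv_rev] using h

/-- `Aut_N(G)`: automorphisms of `G` fixing `N` elementwise. -/
def autN {G : Type*} [Group G] (N : Subgroup G) : Subgroup (MulAut G) where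
  carrier := {f | ∀ n ∈ N, f n = n}
  one_mem' := fun n _ => rfl
  mul_mem' := by
    intro f₁ f₂ h₁ h₂ n hn
    rw [MulAut.mul_apply, h₂ n hn, h₁ n hn]
  inv_mem' := by
    intro f hf n hn
    exact f.injective (by rw [MulAut.apply_inv_self]; exact (hf n hn).symm)

/-- `Aut_c^m(G)`: `m`-th class preserving automorphisms, conjugation by
elements of `γ_m(G) = (⊤ : Subgroup G).lowerCentralSeries (m-1)`. -/
def autC (G : Type*) [Group G] (m : ℕ) : Subgroup (MulAut G) where
  carrier := {f | ∀ g : G, ∃ x ∈ (⊤ : Subgroup G).lowerCentralSeries (m - 1), f g = x⁻¹ * g * x}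
  one_mem' := fun g => ⟨1, Subgroup.one_mem _, by simp⟩
  mul_mem' := by
    intro f₁ f₂ h₁ h₂ g
    obtain ⟨x, hx, hx2⟩ := h₂ g
    obtain ⟨y, hy, hy2⟩ := h₁ (x⁻¹ * g * x)
    exact ⟨x * y, Subgroup.mul_mem _ hx hy, by rw [MulAut.mul_apply, hx2, hy2]; group⟩
  inv_mem' := by
    intro f hf g
    obtain ⟨x, hx, hx2⟩ := hf (f⁻¹ g)
    refine ⟨x⁻¹, Subgroup.inv_mem _ hx, ?_⟩
    rw [MulAut.apply_inv_self] at hx2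
    rw [inv_inv]
    conv_rhs => rw [hx2]
    group

/-- A group is purely non-abelian if it has no non-trivial abelian direct factor. -/
def PurelyNonabelian (H : Type u) [Group H] : Prop :=
  ¬ ∃ (K B : Type u) (_ : Group K) (_ : CommGroup B),
      Nontrivial B ∧ Nonempty (H ≃* K × B)

/-- `Aut_N^M(G) = Aut^M(G) ∩ Aut_N(G)`. -/
def autMN {G : Type*} [Group G] (M N : Subgroup G) : Subgroup (MulAut G) :=
  autM M ⊓ autN N

open scoped commutatorElement

-- Lemma 1: nontrivial finite p-group has proper commutator subgroup
lemma auxCommutatorNeTop {p : ℕ} {Q : Type*} [Group Q] [Finite Q] [Nontrivial Q]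
    (hp : p.Prime) (hQ : IsPGroup p Q) : commutator Q ≠ ⊤ := by
  haveI : Fact p.Prime := ⟨hp⟩
  intro htop
  obtain ⟨k, hk⟩ := nilpotent_iff_lowerCentralSeries.mp hQ.isNilpotent
  have hall : ∀ m, (⊤ : Subgroup Q).lowerCentralSeries m = ⊤ := by
    intro m
    induction m with
    | zero => rfl
    | succ m ih =>
      rw [lowerCentralSeries_succ, ih]
      exact htop
  obtain ⟨x, hx⟩ := exists_ne (1 : Q)
  have : x ∈ (⊤ : Subgroup Q).lowerCentralSeries k := (hall k).symm ▸ Subgroup.mem_top x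
  rw [hk, Subgroup.mem_bot] at this
  exact hx this

-- character on an elementary abelian p-group separating a nontrivial element
lemma auxCharOfExponentP {p : ℕ} (hp : p.Prime) {B : Type*} [CommGroup B]
    (hBp : ∀ b : B, b ^ p = 1) {b : B} (hb : b ≠ 1) :
    ∃ ψ : B →* Multiplicative (ZMod p), ψ b ≠ 1 := by
  haveI : Fact p.Prime := ⟨hp⟩
  have hsm : ∀ x : Additive B, p • x = 0 := by
    intro x
    exact Additive.toMul.injective (by simpa [toMul_nsmul] using hBp x.toMul)
  haveI : Module (ZMod p) (Additive B) := AddCommGroup.zmodModule hsm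
  have hbv : Additive.ofMul b ≠ 0 := by simpa using hb
  have hφ : ∃ φ : Additive B →ₗ[ZMod p] ZMod p, φ (Additive.ofMul b) ≠ 0 := by
    by_contra hc
    push_neg at hc
    exact hbv ((Module.forall_dual_apply_eq_zero_iff (ZMod p) _).mp hc)
  obtain ⟨φ, hφb⟩ := hφ
  refine ⟨{ toFun := fun x => Multiplicative.ofAdd (φ (Additive.ofMul x))
            map_one' := ?_
            map_mul' := ?_ }, ?_⟩
  · have h0 : φ (Additive.ofMul (1 : B)) = 0 := map_zero φ
    simp only [h0]
    rfl
  · intro x y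
    have hxy : Additive.ofMul (x * y) = Additive.ofMul x + Additive.ofMul y := rfl
    simp only [hxy, map_add]
    rfl
  · intro hcon
    exact hφb (Multiplicative.ofAdd.injective (a₁ := φ (Additive.ofMul b)) (a₂ := 0) hcon)

-- Lemma 2: existence of a character vanishing on the center
lemma auxExistsChar {p : ℕ} {G : Type*} [Group G] [Finite G] (hp : p.Prime)
    (hG : IsPGroup p G) (hna : ¬ ∀ a b : G, a * b = b * a) :
    ∃ χ : G →* Multiplicative (ZMod p),
      (∀ w ∈ Subgroup.center G, χ w = 1) ∧ ∃ g, χ g ≠ 1 := by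
  haveI : Fact p.Prime := ⟨hp⟩
  set Z := Subgroup.center G with hZdef
  set N : Subgroup G := Z ⊔ commutator G with hNdef
  -- the center is proper
  have hZne : Z ≠ ⊤ := by
    intro hZt
    exact hna fun a b => by
      have : a ∈ Z := hZt ▸ Subgroup.mem_top a
      exact (Subgroup.mem_center_iff.mp this b).symm
  -- N is proper
  have hNne : N ≠ ⊤ := by
    intro hNt
    have hlt : Z < ⊤ := lt_top_iff_ne_top.mpr hZne
    obtain ⟨g, -, hgZ⟩ := SetLike.exists_of_lt hlt
    haveI : Nontrivial (G ⧸ Z) := by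
      refine ⟨⟨QuotientGroup.mk g, 1, ?_⟩⟩
      rw [Ne, QuotientGroup.eq_one_iff]
      exact hgZ
    have hQp : IsPGroup p (G ⧸ Z) := hG.to_quotient Z
    have hcomm : commutator (G ⧸ Z) ≠ ⊤ := auxCommutatorNeTop hp hQp
    apply hcomm
    have h1 : Subgroup.map (QuotientGroup.mk' Z) N = ⊤ := by
      rw [hNt]
      exact Subgroup.map_top_of_surjective _ (QuotientGroup.mk'_surjective Z)
    have h2 : Subgroup.map (QuotientGroup.mk' Z) N =
        Subgroup.map (QuotientGroup.mk' Z) Z ⊔ Subgroup.map (QuotientGroup.mk' Z) (commutator G) := by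
      rw [hNdef, Subgroup.map_sup]
    have h3 : Subgroup.map (QuotientGroup.mk' Z) Z = ⊥ := by
      refine le_antisymm ?_ bot_le
      rintro _ ⟨z, hz, rfl⟩
      simpa [Subgroup.mem_bot, QuotientGroup.eq_one_iff] using hz
    have h4 : Subgroup.map (QuotientGroup.mk' Z) (commutator G) = commutator (G ⧸ Z) := by
      rw [commutator_def, commutator_def, Subgroup.map_commutator,
        Subgroup.map_top_of_surjective _ (QuotientGroup.mk'_surjective Z)]
    rw [h1] at h2
    rw [h3, h4, bot_sup_eq] at h2
    exact h2.symm
  -- the abelian quotient A = G / N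
  haveI : N.Normal := by
    rw [hNdef]
    infer_instance
  set A := G ⧸ N with hAdef
  letI : CommGroup A :=
    { (inferInstance : Group A) with
      mul_comm := by
        intro a b
        refine QuotientGroup.induction_on a fun x => ?_
        refine QuotientGroup.induction_on b fun y => ?_
        rw [← QuotientGroup.mk_mul, ← QuotientGroup.mk_mul, QuotientGroup.eq]
        have hxy : (x * y)⁻¹ * (y * x) = ⁅y⁻¹, x⁻¹⁆ := by
          simp [commutatorElement_def]; group
        rw [hxy]
        exact (le_sup_right : _root_.commutator G ≤ N)
          (Subgroup.commutator_mem_commutator (Subgroup.mem_top _) (Subgroup.mem_top _)) }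
  haveI : Nontrivial A := by
    have hlt : N < ⊤ := lt_top_iff_ne_top.mpr hNne
    obtain ⟨g, -, hgN⟩ := SetLike.exists_of_lt hlt
    refine ⟨⟨QuotientGroup.mk g, 1, ?_⟩⟩
    rw [Ne, QuotientGroup.eq_one_iff]
    exact hgN
  have hAp : IsPGroup p A := hG.to_quotient N
  -- quotient by p-th powers
  set R : Subgroup A := (powMonoidHom p : A →* A).range with hRdef
  set B := A ⧸ R with hBdef
  -- R is proper
  have hRne : R ≠ ⊤ := by
    intro hRt
    have hsurj : Function.Surjective (powMonoidHom p : A →* A) :=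
      MonoidHom.range_eq_top.mp hRt
    have hinj : Function.Injective (powMonoidHom p : A →* A) :=
      Finite.injective_iff_surjective.mpr hsurj
    obtain ⟨m, hm⟩ := IsPGroup.iff_card.mp hAp
    have hm0 : m ≠ 0 := by
      rintro rfl
      rw [pow_zero] at hm
      exact Finite.one_lt_card.ne' hm
    have hdvd : p ∣ Nat.card A := by
      rw [hm]
      exact dvd_pow_self p hm0
    obtain ⟨a, ha⟩ := exists_prime_orderOf_dvd_card' p hdvd
    have ha1 : a ≠ 1 := by
      intro h1
      rw [h1, orderOf_one] at ha
      exact hp.one_lt.ne' ha.symm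
    apply ha1
    apply hinj
    rw [powMonoidHom_apply, powMonoidHom_apply, one_pow, ← ha, pow_orderOf_eq_one]
  haveI : Nontrivial B := by
    have hlt : R < ⊤ := lt_top_iff_ne_top.mpr hRne
    obtain ⟨a, -, haR⟩ := SetLike.exists_of_lt hlt
    refine ⟨⟨QuotientGroup.mk a, 1, ?_⟩⟩
    rw [Ne, QuotientGroup.eq_one_iff]
    exact haR
  -- B has exponent p
  have hBp : ∀ b : B, b ^ p = 1 := by
    intro b
    refine QuotientGroup.induction_on b fun a => ?_
    rw [← QuotientGroup.mk_pow, QuotientGroup.eq_one_iff]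
    exact ⟨a, rfl⟩
  obtain ⟨b, hb1⟩ := exists_ne (1 : B)
  obtain ⟨ψ, hψb⟩ := auxCharOfExponentP hp hBp hb1
  let π : G →* B := (QuotientGroup.mk' R).comp (QuotientGroup.mk' N)
  refine ⟨ψ.comp π, ?_, ?_⟩
  · intro w hw
    have hπ : π w = 1 := by
      have hw1 : (QuotientGroup.mk' N) w = 1 := by
        rw [QuotientGroup.mk'_apply, QuotientGroup.eq_one_iff]
        exact (le_sup_left : Z ≤ N) hw
      simp [π, hw1]
    rw [MonoidHom.comp_apply, hπ, map_one]
  · obtain ⟨g, hg⟩ : ∃ g : G, π g = b :=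
      ((QuotientGroup.mk'_surjective R).comp (QuotientGroup.mk'_surjective N)) b
    refine ⟨g, ?_⟩
    rw [MonoidHom.comp_apply, hg]
    exact hψb



lemma auxSupPow {p : ℕ} (hp : p.Prime) {C : Type*} [CommGroup C] [Finite C]
    (hC : IsPGroup p C) {H : Subgroup C}
    (hH : H ⊔ (powMonoidHom p : C →* C).range = ⊤) : H = ⊤ := by
  haveI : Fact p.Prime := ⟨hp⟩
  have key : ∀ k, H ⊔ (powMonoidHom (p ^ k) : C →* C).range = ⊤ := by
    intro k
    induction k with
    | zero =>
      have : (powMonoidHom (p ^ 0) : C →* C).range = ⊤ := by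
        rw [MonoidHom.range_eq_top]
        intro x
        exact ⟨x, by simp [powMonoidHom_apply]⟩
      rw [this, sup_top_eq]
    | succ k ih =>
      rw [eq_top_iff]
      intro x _
      have hx : x ∈ H ⊔ (powMonoidHom (p ^ k) : C →* C).range := ih ▸ Subgroup.mem_top x
      rw [Subgroup.mem_sup] at hx
      obtain ⟨h1, hh1, _, ⟨z, rfl⟩, heq⟩ := hx
      have hz : z ∈ H ⊔ (powMonoidHom p : C →* C).range := hH ▸ Subgroup.mem_top z
      rw [Subgroup.mem_sup] at hz
      obtain ⟨h2, hh2, _, ⟨u, rfl⟩, heqz⟩ := hz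
      rw [Subgroup.mem_sup]
      simp only [powMonoidHom_apply] at heq heqz
      refine ⟨h1 * h2 ^ p ^ k, mul_mem hh1 (pow_mem hh2 _), u ^ p ^ (k + 1), ⟨u, ?_⟩, ?_⟩
      · rw [powMonoidHom_apply]
      · rw [← heq, ← heqz, mul_pow, ← pow_mul, ← pow_succ', mul_assoc]
  -- now kill the powers
  obtain ⟨m, hm⟩ := IsPGroup.iff_card.mp hC
  have hbot : (powMonoidHom (p ^ m) : C →* C).range ≤ ⊥ := by
    rintro _ ⟨y, rfl⟩
    rw [powMonoidHom_apply, Subgroup.mem_bot, ← hm, pow_card_eq_one']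
  have := key m
  rwa [le_bot_iff.mp hbot, sup_bot_eq] at this

lemma auxCardSocle {p : ℕ} (hp : p.Prime) {C : Type*} [CommGroup C] [Finite C]
    (hC : IsPGroup p C) : Nat.card {x : C // x ^ p = 1} = p ^ Group.rank C := by
  classical
  haveI : Fact p.Prime := ⟨hp⟩
  set φ : C →* C := powMonoidHom p with hφdef
  set R : Subgroup C := φ.range with hRdef
  set W := C ⧸ R with hWdef
  set π : C →* W := QuotientGroup.mk' R with hπdef
  have hπsurj : Function.Surjective π := QuotientGroup.mk'_surjective R
  have hWp : ∀ w : W, w ^ p = 1 := by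
    intro w
    refine QuotientGroup.induction_on w fun a => ?_
    rw [← QuotientGroup.mk_pow, QuotientGroup.eq_one_iff]
    exact ⟨a, rfl⟩
  have hsm : ∀ x : Additive W, p • x = 0 := fun x =>
    Additive.toMul.injective (by simpa [toMul_nsmul] using hWp x.toMul)
  haveI : Module (ZMod p) (Additive W) := AddCommGroup.zmodModule hsm
  -- step 1: the socle has the same cardinality as W
  have hcard1 : Nat.card {x : C // x ^ p = 1} = Nat.card W := by
    have hker : Nat.card {x : C // x ^ p = 1} = Nat.card φ.ker := by
      apply Nat.card_congr
      apply Equiv.subtypeEquivRight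
      intro x
      rw [MonoidHom.mem_ker, powMonoidHom_apply]
    have h1 : Nat.card C = Nat.card (C ⧸ φ.ker) * Nat.card φ.ker :=
      Subgroup.card_eq_card_quotient_mul_card_subgroup φ.ker
    have h2 : Nat.card C = Nat.card W * Nat.card R :=
      Subgroup.card_eq_card_quotient_mul_card_subgroup R
    have h3 : Nat.card (C ⧸ φ.ker) = Nat.card R :=
      Nat.card_congr (QuotientGroup.quotientKerEquivRange φ).toEquiv
    rw [h3] at h1
    rw [mul_comm] at h2
    have hpos : 0 < Nat.card R := Nat.card_pos
    rw [hker]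
    exact Nat.eq_of_mul_eq_mul_left hpos (h1.symm.trans h2)
  -- step 2: rank C = finrank of W
  set d := Module.finrank (ZMod p) (Additive W) with hd
  have hrank : Group.rank C = d := by
    have bV : Module.Basis (Fin d) (ZMod p) (Additive W) := Module.finBasis (ZMod p) (Additive W)
    -- upper bound
    have h4 : Group.rank C ≤ d := by
      choose c hc using fun i : Fin d => hπsurj (bV i).toMul
      set T : Finset C := Finset.image c Finset.univ with hT
      have hHtop : Subgroup.closure (T : Set C) = ⊤ := by
        apply auxSupPow hp hC
        rw [eq_top_iff]
        intro x _
        have hind : ∀ v, v ∈ Submodule.span (ZMod p) (Set.range bV) →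
            ∃ y, y ∈ Subgroup.closure (T : Set C) ∧ π y = Additive.toMul v := by
          intro v hv
          induction hv using Submodule.span_induction with
          | mem v hvmem =>
            obtain ⟨i, rfl⟩ := hvmem
            have hciT : c i ∈ T := by
              rw [hT]
              exact Finset.mem_image.mpr ⟨i, Finset.mem_univ i, rfl⟩
            exact ⟨c i, Subgroup.subset_closure hciT, hc i⟩
          | zero => exact ⟨1, one_mem _, by simp⟩
          | add v w hv hw ihv ihw =>
            obtain ⟨y, hy, hyeq⟩ := ihv
            obtain ⟨z, hz, hzeq⟩ := ihw
            exact ⟨y * z, mul_mem hy hz, by rw [map_mul, hyeq, hzeq]; rfl⟩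
          | smul a v hv ihv =>
            obtain ⟨y, hy, hyeq⟩ := ihv
            refine ⟨y ^ a.val, pow_mem hy _, ?_⟩
            rw [map_pow, hyeq]
            have h1 : a • v = a.val • v := by
              rw [← Nat.cast_smul_eq_nsmul (ZMod p) a.val v, ZMod.natCast_rightInverse a]
            rw [h1, toMul_nsmul]
        have hspan : Additive.ofMul (π x) ∈ Submodule.span (ZMod p) (Set.range bV) := by
          rw [bV.span_eq]; trivial
        obtain ⟨y, hy, hyeq⟩ := hind _ hspan
        have hker : y⁻¹ * x ∈ R := by
          have hπ1 : π (y⁻¹ * x) = 1 := by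
            rw [map_mul, map_inv, hyeq]
            simp
          rw [hπdef] at hπ1
          rwa [QuotientGroup.mk'_apply, QuotientGroup.eq_one_iff] at hπ1
        have hxeq : x = y * (y⁻¹ * x) := by group
        rw [hxeq]
        exact Subgroup.mul_mem_sup hy hker
      calc Group.rank C ≤ T.card := Group.rank_le hHtop
        _ ≤ Finset.univ.card := Finset.card_image_le
        _ = d := by simp
    -- lower bound
    have h5 : d ≤ Group.rank C := by
      obtain ⟨S, hScard, hStop⟩ := Group.rank_spec C
      set SV : Finset (Additive W) := Finset.image (fun s => Additive.ofMul (π s)) S with hSV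
      have hspan : Submodule.span (ZMod p) (SV : Set (Additive W)) = ⊤ := by
        rw [eq_top_iff]
        rintro v -
        have hclosure : ∀ x, x ∈ Subgroup.closure (S : Set C) →
            Additive.ofMul (π x) ∈ Submodule.span (ZMod p) (SV : Set (Additive W)) := by
          intro x hxmem
          induction hxmem using Subgroup.closure_induction with
          | mem y hy =>
            have hmemSV : Additive.ofMul (π y) ∈ (SV : Set (Additive W)) := by
              rw [hSV]
              exact Finset.mem_coe.mpr (Finset.mem_image.mpr ⟨y, hy, rfl⟩)
            exact Submodule.subset_span hmemSV
          | one => simpa using Submodule.zero_mem _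
          | mul a b ha hb iha ihb =>
            have : Additive.ofMul (π (a * b)) = Additive.ofMul (π a) + Additive.ofMul (π b) := by
              rw [map_mul]; rfl
            rw [this]
            exact Submodule.add_mem _ iha ihb
          | inv a ha iha =>
            have : Additive.ofMul (π a⁻¹) = -Additive.ofMul (π a) := by
              rw [map_inv]; rfl
            rw [this]
            exact Submodule.neg_mem _ iha
        obtain ⟨x, hx⟩ := hπsurj v.toMul
        have hmem := hclosure x (hStop ▸ Subgroup.mem_top x)
        have hv : Additive.ofMul (π x) = v := by rw [hx]; rfl
        rwa [hv] at hmem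
      have h6 : d ≤ (SV : Set (Additive W)).toFinset.card := by
        have h7 := finrank_span_le_card (R := ZMod p) (SV : Set (Additive W))
        rwa [hspan, finrank_top] at h7
      rw [Finset.toFinset_coe] at h6
      calc d ≤ SV.card := h6
        _ ≤ S.card := Finset.card_image_le
        _ = Group.rank C := hScard
    exact le_antisymm h4 h5
  -- step 3: card of W
  have hcard2 : Nat.card W = p ^ d := by
    letI : Fintype W := Fintype.ofFinite W
    have h8 := Module.card_eq_pow_finrank (K := ZMod p) (V := Additive W)
    rw [ZMod.card p] at h8
    calc Nat.card W = Nat.card (Additive W) := Nat.card_congr Additive.ofMul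
      _ = Fintype.card (Additive W) := Nat.card_eq_fintype_card
      _ = p ^ d := h8
  rw [hcard1, hcard2, hrank]

lemma mem_autM_iff {G : Type*} [Group G] {M : Subgroup G} {f : MulAut G} :
    f ∈ autM M ↔ ∀ g : G, g⁻¹ * f g ∈ M := Iff.rfl

lemma mem_autMN_iff {G : Type*} [Group G] {M N : Subgroup G} {f : MulAut G} :
    f ∈ autMN M N ↔ (∀ g : G, g⁻¹ * f g ∈ M) ∧ ∀ x ∈ N, f x = x := by
  rw [autMN, Subgroup.mem_inf]
  exact Iff.rfl


/-- if `G` is a finite non-abelian `p`-group, `n ≥ 2`, and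
`Aut_{Z(G)}^{γ_n(G)}(G) = Autcent(G)`, then `γ_n(G) ⊆ Z(G)` and
`d(γ_n(G)) = d(Z(G))`, where `d` is the minimal number of generators. -/
theorem statement14 {p : ℕ} (hp : p.Prime) (n : ℕ) (hn : 2 ≤ n)
    {G : Type u} [Group G] [Finite G]
    (hpG : IsPGroup p G) (hna : ¬ ∀ a b : G, a * b = b * a)
    (h : autMN ((⊤ : Subgroup G).lowerCentralSeries (n - 1)) (Subgroup.center G) =
      autM (Subgroup.center G)) :
    (⊤ : Subgroup G).lowerCentralSeries (n - 1) ≤ Subgroup.center G ∧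
      Group.rank ((⊤ : Subgroup G).lowerCentralSeries (n - 1)) =
        Group.rank (Subgroup.center G) := by

  haveI : Fact p.Prime := ⟨hp⟩
  haveI : NeZero p := ⟨hp.ne_zero⟩
  haveI : Fact (1 < p) := ⟨hp.one_lt⟩
  obtain ⟨m, hm⟩ : ∃ m, n - 1 = m + 1 := ⟨n - 2, by omega⟩
  have hLsucc : (⊤ : Subgroup G).lowerCentralSeries (n - 1) = ⁅(⊤ : Subgroup G).lowerCentralSeries m, ⊤⁆ := by
    rw [hm]
    exact lowerCentralSeries_succ _ m
  -- Part 1 : γ_n(G) ≤ Z(G)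
  have hMZ : (⊤ : Subgroup G).lowerCentralSeries (n - 1) ≤ Subgroup.center G := by
    rw [hLsucc, Subgroup.commutator_le]
    intro x hx g _
    have hconj : (MulAut.conj x) ∈ autM (Subgroup.center G) := by
      rw [← h, mem_autMN_iff]
      constructor
      · intro g'
        have hcomm : g'⁻¹ * (MulAut.conj x) g' = ⁅g'⁻¹, x⁆ := by
          rw [MulAut.conj_apply, commutatorElement_def]
          group
        rw [hcomm, hLsucc, Subgroup.commutator_comm]
        exact Subgroup.commutator_mem_commutator (Subgroup.mem_top _) hx
      · intro z hz
        rw [MulAut.conj_apply, Subgroup.mem_center_iff.mp hz x, mul_inv_cancel_right]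
    have hzmem := mem_autM_iff.mp hconj g⁻¹
    have hEq : ⁅x, g⁆ = (g⁻¹⁻¹ * (MulAut.conj x) g⁻¹)⁻¹ := by
      rw [MulAut.conj_apply, commutatorElement_def]
      group
    rw [hEq]
    exact Subgroup.inv_mem _ hzmem
  refine ⟨hMZ, ?_⟩
  -- Step A : every element of order dividing p in the center lies in γ_n(G)
  have stepA : ∀ z : G, z ∈ Subgroup.center G → z ^ p = 1 →
      z ∈ (⊤ : Subgroup G).lowerCentralSeries (n - 1) := by
    intro z hzZ hzp
    by_contra hzM
    obtain ⟨χ, hχZ, g₀, hχg₀⟩ := auxExistsChar hp hpG hna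
    have hords : orderOf z ∣ p := orderOf_dvd_of_pow_eq_one hzp
    have hζadd : ∀ a b : ZMod p, z ^ (a + b).val = z ^ a.val * z ^ b.val := by
      intro a b
      rw [← pow_add]
      apply pow_eq_pow_iff_modEq.mpr
      apply Nat.ModEq.of_dvd hords
      rw [ZMod.val_add]
      exact Nat.mod_modEq _ p
    have hζZ : ∀ k : ZMod p, z ^ k.val ∈ Subgroup.center G := fun k => pow_mem hzZ _
    let F : G → G := fun g => g * z ^ (Multiplicative.toAdd (χ g)).val
    have hFmul : ∀ a b : G, F (a * b) = F a * F b := by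
      intro a b
      show (a * b) * z ^ (Multiplicative.toAdd (χ (a * b))).val =
        (a * z ^ (Multiplicative.toAdd (χ a)).val) * (b * z ^ (Multiplicative.toAdd (χ b)).val)
      have h1 : Multiplicative.toAdd (χ (a * b)) =
          Multiplicative.toAdd (χ a) + Multiplicative.toAdd (χ b) := by
        rw [map_mul]
        rfl
      rw [h1, hζadd]
      have hc : b * z ^ (Multiplicative.toAdd (χ a)).val =
          z ^ (Multiplicative.toAdd (χ a)).val * b :=
        Subgroup.mem_center_iff.mp (hζZ _) b
      have key : ∀ u v A B : G, v * A = A * v → u * v * (A * B) = u * A * (v * B) := by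
        intro u v A B hvA
        rw [mul_assoc u v, ← mul_assoc v A B, hvA, mul_assoc A v B, ← mul_assoc u A (v * B)]
      exact key a b _ _ hc
    have hF1 : F 1 = 1 := by
      show (1 : G) * z ^ (Multiplicative.toAdd (χ 1)).val = 1
      rw [map_one]
      show (1 : G) * z ^ (0 : ZMod p).val = 1
      rw [ZMod.val_zero, pow_zero, mul_one]
    let f : G →* G := { toFun := F, map_one' := hF1, map_mul' := hFmul }
    have hfapp : ∀ g : G, f g = g * z ^ (Multiplicative.toAdd (χ g)).val := fun _ => rfl
    have hfinj : Function.Injective f := by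
      rw [injective_iff_map_eq_one]
      intro g hg
      rw [hfapp] at hg
      have hgZ : g ∈ Subgroup.center G := by
        have hginv : g = (z ^ (Multiplicative.toAdd (χ g)).val)⁻¹ :=
          eq_inv_of_mul_eq_one_left hg
        rw [hginv]
        exact Subgroup.inv_mem _ (hζZ _)
      have hχg : χ g = 1 := hχZ g hgZ
      rw [hχg] at hg
      have h0 : (Multiplicative.toAdd (1 : Multiplicative (ZMod p))).val = 0 := ZMod.val_zero
      rw [h0, pow_zero, mul_one] at hg
      exact hg
    have hfbij : Function.Bijective f := (Finite.injective_iff_bijective).mp hfinj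
    let α : MulAut G := MulEquiv.ofBijective f hfbij
    have hαapp : ∀ g : G, α g = g * z ^ (Multiplicative.toAdd (χ g)).val := fun _ => rfl
    have hαZ : α ∈ autM (Subgroup.center G) := by
      rw [mem_autM_iff]
      intro g
      rw [hαapp, inv_mul_cancel_left]
      exact hζZ _
    rw [← h, mem_autMN_iff] at hαZ
    have hζM := hαZ.1 g₀
    rw [hαapp, inv_mul_cancel_left] at hζM
    set k : ZMod p := Multiplicative.toAdd (χ g₀) with hk
    have hk0 : k ≠ 0 := by
      intro hk0
      apply hχg₀
      have : χ g₀ = Multiplicative.ofAdd k := rfl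
      rw [this, hk0]
      rfl
    have hval1 : (k * k⁻¹).val = 1 := by
      rw [mul_inv_cancel₀ hk0, ZMod.val_one]
    have hmod : k.val * (k⁻¹).val ≡ 1 [MOD p] := by
      rw [← hval1, ZMod.val_mul]
      exact (Nat.mod_modEq _ p).symm
    have hz2 : (z ^ k.val) ^ (k⁻¹).val = z := by
      rw [← pow_mul]
      have hpow : z ^ (k.val * (k⁻¹).val) = z ^ 1 :=
        pow_eq_pow_iff_modEq.mpr (Nat.ModEq.of_dvd hords hmod)
      rw [hpow, pow_one]
    exact hzM (hz2 ▸ pow_mem hζM (k⁻¹).val)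
  -- Part 2 : rank equality
  set Z : Subgroup G := Subgroup.center G with hZdef
  set M' : Subgroup ↥Z := ((⊤ : Subgroup G).lowerCentralSeries (n - 1)).subgroupOf Z with hM'def
  have hCZ : IsPGroup p ↥Z := hpG.to_subgroup Z
  have hCM : IsPGroup p ↥M' := hCZ.to_subgroup M'
  letI : CommGroup ↥Z := { (inferInstance : Group ↥Z) with
    mul_comm := fun a b => Subtype.ext (Subgroup.mem_center_iff.mp a.2 b).symm }
  have hcardZ := auxCardSocle hp hCZ
  have hcardM := auxCardSocle hp hCM
  have hEquiv : {x : ↥M' // x ^ p = 1} ≃ {x : ↥Z // x ^ p = 1} :=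
    { toFun := fun x => ⟨x.1.1, by
        have hx := congrArg (fun t : ↥M' => (t : ↥Z)) x.2
        simpa using hx⟩
      invFun := fun x => ⟨⟨x.1, by
        rw [hM'def, Subgroup.mem_subgroupOf]
        apply stepA
        · exact x.1.2
        · have hx := congrArg (fun t : ↥Z => (t : G)) x.2
          simpa using hx⟩, by
        apply Subtype.ext
        have hx : (x.1 : ↥Z) ^ p = 1 := x.2
        simpa using hx⟩
      left_inv := fun x => Subtype.ext (Subtype.ext rfl)
      right_inv := fun x => Subtype.ext rfl }
  have hcards : Nat.card {x : ↥M' // x ^ p = 1} = Nat.card {x : ↥Z // x ^ p = 1} :=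
    Nat.card_congr hEquiv
  rw [hcardM, hcardZ] at hcards
  have hranks : Group.rank ↥M' = Group.rank ↥Z :=
    Nat.pow_right_injective hp.two_le hcards
  have hfinal : Group.rank ↥((⊤ : Subgroup G).lowerCentralSeries (n - 1)) = Group.rank ↥M' :=
    (Group.rank_congr (Subgroup.subgroupOfEquivOfLe hMZ)).symm
  rw [hfinal, hranks]
end

section
/- Let p be a prime and let G be a finite non-abelian p-group. Then Aut_{Z(G)}^{γ_2(G)}(G) = Autcent(G) if and only if γ_2(G) = Z(G). -/
open scoped commutatorElement

section AuxLemmas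

open Subgroup

lemma zmod_embed {n q : ℕ} (hn : 0 < n) (hq : 0 < q) (hdvd : n ∣ q) {a : ZMod n} (ha : a ≠ 0) :
    ∃ φ : Multiplicative (ZMod n) →* Multiplicative (ZMod q),
      φ (Multiplicative.ofAdd a) ≠ 1 := by
  have hn' : NeZero n := ⟨hn.ne'⟩
  have hq' : NeZero q := ⟨hq.ne'⟩
  set k : ℕ := q / n with hk
  have hnk : n * k = q := Nat.mul_div_cancel' hdvd
  let g : ℤ →+ ZMod q := zmultiplesHom (ZMod q) ((k : ℕ) : ZMod q)
  have hgn : g (n : ℤ) = 0 := by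
    show (n : ℤ) • ((k : ℕ) : ZMod q) = 0
    rw [zsmul_eq_mul]; push_cast; rw [← Nat.cast_mul, hnk, ZMod.natCast_self]
  let e : ZMod n →+ ZMod q := ZMod.lift n ⟨g, hgn⟩
  refine ⟨AddMonoidHom.toMultiplicative e, ?_⟩
  have hval : e a = ((a.val * k : ℕ) : ZMod q) := by
    have h1 : ((a.val : ℤ) : ZMod n) = a := by
      simpa using ZMod.natCast_rightInverse a
    conv_lhs => rw [← h1]
    rw [ZMod.lift_coe]
    show (a.val : ℤ) • ((k : ℕ) : ZMod q) = _
    rw [zsmul_eq_mul]; push_cast; ring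
  intro hcon
  have : e a = 0 := by
    simpa using hcon
  rw [hval, ZMod.natCast_eq_zero_iff] at this
  have hvpos : 0 < a.val := Nat.pos_of_ne_zero (fun h0 => ha (by
    have := ZMod.natCast_rightInverse (n := n) a
    rw [← this, h0]; simp))
  have hkpos : 0 < k := Nat.div_pos (Nat.le_of_dvd hq hdvd) hn
  have hlt : a.val * k < q := by
    calc a.val * k < n * k := by exact (Nat.mul_lt_mul_right hkpos).mpr a.val_lt
    _ = q := hnk
  have := Nat.le_of_dvd (Nat.mul_pos hvpos hkpos) this
  omega

/-- Separation: a finite commutative group of exponent dividing `q` admits,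
for any `b ≠ 1`, a hom to `Multiplicative (ZMod q)` not killing `b`. -/
lemma sep_hom {B : Type*} [CommGroup B] [Finite B] {q : ℕ} (hq : 0 < q)
    (hexp : ∀ x : B, x ^ q = 1) {b : B} (hb : b ≠ 1) :
    ∃ φ : B →* Multiplicative (ZMod q), φ b ≠ 1 := by
  obtain ⟨ι, _, n, hn1, ⟨e⟩⟩ := CommGroup.equiv_prod_multiplicative_zmod_of_finite B
  classical
  obtain ⟨i, hi⟩ : ∃ i : ι, e b i ≠ 1 := by
    contrapose! hb
    exact (MulEquiv.map_eq_one_iff e).mp <| funext hb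
  -- n i divides q
  have hdvd : n i ∣ q := by
    have h1 : (Pi.mulSingle i (Multiplicative.ofAdd (1 : ZMod (n i))) :
        (j : ι) → Multiplicative (ZMod (n j))) ^ q = 1 := by
      have := hexp (e.symm (Pi.mulSingle i (Multiplicative.ofAdd (1 : ZMod (n i)))))
      have := congrArg e this
      simpa using this
    have h2 := congrFun h1 i
    simp only [Pi.pow_apply, Pi.mulSingle_eq_same, Pi.one_apply] at h2
    have h3 : (q : ZMod (n i)) = 0 := by
      have := congrArg Multiplicative.toAdd h2
      simpa [toAdd_pow] using this
    exact (ZMod.natCast_eq_zero_iff q (n i)).mp h3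
  have hne : (e b i).toAdd ≠ 0 := by
    simpa using hi
  obtain ⟨φi, hφi⟩ := zmod_embed (lt_trans Nat.zero_lt_one (hn1 i)) hq hdvd hne
  refine ⟨(φi.comp (Pi.evalMonoidHom (fun j => Multiplicative (ZMod (n j))) i)).comp
    e.toMonoidHom, ?_⟩
  simpa using hφi

lemma pgroup_pow_card {p : ℕ} (hp : p.Prime) {A : Type*} [Group A] [Finite A]
    (hA : ∀ x : A, ∃ k, x ^ p ^ k = 1) (x : A) : x ^ p ^ (Nat.card A) = 1 := by
  obtain ⟨k, hk⟩ := hA x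
  obtain ⟨j, _, hx⟩ := (Nat.dvd_prime_pow hp).mp (orderOf_dvd_of_pow_eq_one hk)
  have hcard : p ^ j ∣ Nat.card A := hx ▸ orderOf_dvd_natCard x
  have hle : p ^ j ≤ Nat.card A := Nat.le_of_dvd Nat.card_pos hcard
  have hjlt : j < Nat.card A := by
    by_contra hcon
    push_neg at hcon
    have : p ^ Nat.card A ≤ p ^ j := Nat.pow_le_pow_right hp.pos hcon
    have h2 : Nat.card A < 2 ^ Nat.card A := Nat.lt_two_pow_self
    have h3 : (2:ℕ) ^ Nat.card A ≤ p ^ Nat.card A := Nat.pow_le_pow_left hp.two_le _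
    omega
  exact orderOf_dvd_iff_pow_eq_one.mp (hx ▸ pow_dvd_pow p hjlt.le)

lemma pow_mod_eq {G : Type*} [Group G] {w : G} {q : ℕ} (hwq : w ^ q = 1) (a : ℕ) :
    w ^ (a % q) = w ^ a := by
  conv_rhs => rw [← Nat.mod_add_div a q, pow_add, pow_mul, hwq, one_pow, mul_one]

lemma cen_monoidHom {G : Type*} [Group G] {q : ℕ} [NeZero q] {w : G}
    (hw : w ∈ Subgroup.center G) (hwq : w ^ q = 1) (ψ : G →* Multiplicative (ZMod q)) :
    ∃ φ : G →* G, ∀ g, φ g = g * w ^ ((ψ g).toAdd.val) := by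
  have hcomm : ∀ (k : ℕ) (u : G), u * w ^ k = w ^ k * u := fun k u =>
    Subgroup.mem_center_iff.mp (pow_mem hw k) u
  refine ⟨{ toFun := fun g => g * w ^ ((ψ g).toAdd.val),
            map_one' := ?_,
            map_mul' := ?_ }, fun g => rfl⟩
  · simp
  intro g h
  show (g * h) * w ^ ((ψ (g*h)).toAdd.val) = (g * w ^ ((ψ g).toAdd.val)) * (h * w ^ ((ψ h).toAdd.val))
  have h1 : (ψ (g*h)).toAdd = (ψ g).toAdd + (ψ h).toAdd := by
    rw [map_mul]; rfl
  rw [h1, ZMod.val_add, pow_mod_eq hwq, pow_add]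
  rw [show g * w ^ ((ψ g).toAdd.val) * (h * w ^ ((ψ h).toAdd.val))
      = g * (w ^ ((ψ g).toAdd.val) * h) * w ^ ((ψ h).toAdd.val) by group,
    ← hcomm _ h]
  group

lemma comm_left_central {G : Type*} [Group G] {z : G} (hz : ∀ u : G, u * z = z * u)
    (a c : G) : ⁅a * z, c⁆ = ⁅a, c⁆ := by
  have h1 : z * c * z⁻¹ = c := by rw [← hz c]; group
  rw [commutatorElement_def, commutatorElement_def, mul_inv_rev]
  calc a * z * c * (z⁻¹ * a⁻¹) * c⁻¹ = a * (z * c * z⁻¹) * a⁻¹ * c⁻¹ := by group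
    _ = a * c * a⁻¹ * c⁻¹ := by rw [h1]

lemma comm_right_central {G : Type*} [Group G] {w : G} (hw : ∀ u : G, u * w = w * u)
    (a b : G) : ⁅a, b * w⁆ = ⁅a, b⁆ := by
  have h1 : w * a⁻¹ * w⁻¹ = a⁻¹ := by rw [← hw a⁻¹]; group
  rw [commutatorElement_def, commutatorElement_def, mul_inv_rev]
  calc a * (b * w) * a⁻¹ * (w⁻¹ * b⁻¹) = a * b * (w * a⁻¹ * w⁻¹) * b⁻¹ := by group
    _ = a * b * a⁻¹ * b⁻¹ := by rw [h1]

/-- A central automorphism fixes every commutator, hence the commutator subgroup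
elementwise. -/
lemma central_fixes_commutator {G : Type*} [Group G] (f : MulAut G)
    (hf : ∀ g : G, g⁻¹ * f g ∈ Subgroup.center G) :
    ∀ x ∈ commutator G, f x = x := by
  intro x hx
  rw [commutator_eq_closure] at hx
  induction hx using Subgroup.closure_induction with
  | mem y hy =>
    obtain ⟨a, b, rfl⟩ := hy
    have ha := hf a
    have hb := hf b
    set za := a⁻¹ * f a with hza
    set zb := b⁻¹ * f b with hzb
    have hfa : f a = a * za := by rw [hza]; group
    have hfb : f b = b * zb := by rw [hzb]; group
    have hca : ∀ u : G, u * za = za * u := fun u => Subgroup.mem_center_iff.mp ha u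
    have hcb : ∀ u : G, u * zb = zb * u := fun u => Subgroup.mem_center_iff.mp hb u
    rw [map_commutatorElement, hfa, hfb, comm_right_central hcb, comm_left_central hca]
  | one => exact map_one f
  | mul x y hx hy ihx ihy => rw [map_mul, ihx, ihy]
  | inv x hx ihx => rw [map_inv, ihx]

lemma val_cast_self {q : ℕ} [NeZero q] (x : ZMod q) : ((x.val : ℕ) : ZMod q) = x :=
  ZMod.natCast_rightInverse x

lemma main_contra {p : ℕ} (hp : p.Prime) {G : Type*} [Group G] [Finite G]
    (hpG : IsPGroup p G) (hna : ¬ ∀ a b : G, a * b = b * a)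
    (hγZ : commutator G ≤ Subgroup.center G)
    {z : G} (hzZ : z ∈ Subgroup.center G) (hzγ : z ∉ commutator G) :
    ∃ α : MulAut G, (∀ g : G, g⁻¹ * α g ∈ Subgroup.center G) ∧
      ¬((∀ g : G, g⁻¹ * α g ∈ commutator G) ∧ ∀ n ∈ Subgroup.center G, α n = n) := by
  classical
  have hfact : Fact p.Prime := ⟨hp⟩
  set A := Abelianization G with hA_def
  set π : G →* A := Abelianization.of with hπ_def
  have hker : ∀ x : G, π x = 1 ↔ x ∈ commutator G := fun x => QuotientGroup.eq_one_iff x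
  have hπsurj : Function.Surjective π := by
    intro x
    obtain ⟨g, hg⟩ := Quotient.exists_rep x
    exact ⟨g, hg⟩
  have hA : ∀ x : A, ∃ k, x ^ p ^ k = 1 := by
    intro x
    obtain ⟨g, rfl⟩ := hπsurj x
    obtain ⟨k, hk⟩ := hpG g
    exact ⟨k, by rw [← map_pow, hk, map_one]⟩
  -- adjust z so that its image has order p
  have ha₀ : π z ≠ 1 := fun h => hzγ ((hker z).mp h)
  obtain ⟨k₀, hk₀⟩ := hA (π z)
  obtain ⟨k, hkle, hordk⟩ := (Nat.dvd_prime_pow hp).mp (orderOf_dvd_of_pow_eq_one hk₀)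
  have hk1 : 1 ≤ k := by
    rcases Nat.eq_zero_or_pos k with h0 | h1
    · exfalso; apply ha₀; rw [← pow_one (π z), ← orderOf_dvd_iff_pow_eq_one, hordk, h0, pow_zero]
    · exact h1
  set z' : G := z ^ p ^ (k - 1) with hz'_def
  set a : A := π z' with ha_def
  have ha_pow : a = (π z) ^ p ^ (k - 1) := by rw [ha_def, hz'_def, map_pow]
  have ha_ne : a ≠ 1 := by
    rw [ha_pow]
    intro hcon
    have := orderOf_dvd_of_pow_eq_one hcon
    rw [hordk] at this
    exact absurd (Nat.pow_dvd_pow_iff_le_right hp.one_lt |>.mp this) (by omega)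
  have ha_ord : orderOf a = p := by
    apply orderOf_eq_prime _ ha_ne
    rw [ha_pow, ← pow_mul, ← pow_succ, Nat.sub_add_cancel hk1, ← orderOf_dvd_iff_pow_eq_one, hordk]
  have hz'Z : z' ∈ Subgroup.center G := pow_mem hzZ _
  have hz'γ : z' ∉ commutator G := fun h => ha_ne ((hker z').mpr h)
  have hz'1 : z' ≠ 1 := fun h => ha_ne (by rw [ha_def, h, map_one])
  -- order of z'
  obtain ⟨m₀, hm₀⟩ := hpG z'
  obtain ⟨m, hmle, hordm⟩ := (Nat.dvd_prime_pow hp).mp (orderOf_dvd_of_pow_eq_one hm₀)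
  have hm1 : 1 ≤ m := by
    rcases Nat.eq_zero_or_pos m with h0 | h1
    · exfalso; apply hz'1
      rw [← pow_one z', ← orderOf_dvd_iff_pow_eq_one, hordm, h0, pow_zero]
    · exact h1
  -- height of a
  set Hk : ℕ → Subgroup A := fun t => MonoidHom.range (powMonoidHom (p ^ t) : A →* A)
    with hHk_def
  have hHk_mem : ∀ (t : ℕ) (x : A), x ∈ Hk t ↔ ∃ y : A, y ^ p ^ t = x := by
    intro t x
    constructor
    · rintro ⟨y, hy⟩; exact ⟨y, hy⟩
    · rintro ⟨y, hy⟩; exact ⟨y, hy⟩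
  have h0 : a ∈ Hk 0 := (hHk_mem 0 a).mpr ⟨a, by rw [pow_zero, pow_one]⟩
  have hbound : a ∉ Hk (Nat.card A) := by
    rw [hHk_mem]
    rintro ⟨y, hy⟩
    exact ha_ne (by rw [← hy, pgroup_pow_card hp hA y])
  set P : ℕ → Prop := fun t => a ∈ Hk t with hP_def
  set h : ℕ := Nat.findGreatest P (Nat.card A) with hh_def
  have hPh : a ∈ Hk h := Nat.findGreatest_spec (P := P) (Nat.zero_le _) h0
  have hhlt : h < Nat.card A := by
    rcases lt_or_eq_of_le (Nat.findGreatest_le (P := P) (Nat.card A)) with hlt | heqc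
    · exact hlt
    · exact absurd (heqc ▸ hPh) hbound
  have hPh1 : a ∉ Hk (h + 1) :=
    Nat.findGreatest_is_greatest (P := P) (Nat.lt_succ_self h) hhlt
  set q : ℕ := p ^ (h + 1) with hq_def
  have hq_pos : 0 < q := Nat.pow_pos hp.pos
  have hq1 : 1 < q := by
    calc 1 < p := hp.one_lt
    _ = p ^ 1 := (pow_one p).symm
    _ ≤ p ^ (h + 1) := Nat.pow_le_pow_right hp.pos (by omega)
  have hqne : NeZero q := ⟨hq_pos.ne'⟩
  -- quotient B and separating character
  set HB : Subgroup A := Hk (h + 1) with hHB_def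
  set B := A ⧸ HB with hB_def
  have hexpB : ∀ x : B, x ^ q = 1 := by
    intro x
    obtain ⟨y, rfl⟩ := QuotientGroup.mk_surjective x
    rw [← QuotientGroup.mk_pow]
    rw [QuotientGroup.eq_one_iff]
    exact (hHk_mem (h+1) (y ^ q)).mpr ⟨y, rfl⟩
  have hBa : (QuotientGroup.mk a : B) ≠ 1 := by
    rw [ne_eq, QuotientGroup.eq_one_iff]
    exact hPh1
  obtain ⟨χ₁, hχ₁⟩ := sep_hom hq_pos hexpB hBa
  set χ₀ : A →* Multiplicative (ZMod q) := χ₁.comp (QuotientGroup.mk' HB) with hχ₀_def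
  have hχ₀a : χ₀ a ≠ 1 := hχ₁
  -- bA with bA ^ p ^ h = a
  obtain ⟨bA, hbA⟩ := (hHk_mem h a).mp hPh
  set d₀ : ZMod q := (χ₀ bA).toAdd with hd₀_def
  have hrel : (χ₀ a).toAdd = ((p ^ h : ℕ) : ZMod q) * d₀ := by
    rw [← hbA, map_pow, toAdd_pow, hd₀_def, nsmul_eq_mul]
  have hχ₀a' : ((p ^ h : ℕ) : ZMod q) * d₀ ≠ 0 := by
    rw [← hrel]
    intro hcon
    apply hχ₀a
    have : (χ₀ a) = Multiplicative.ofAdd (0 : ZMod q) := by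
      rw [← hcon]; rfl
    rw [this]; rfl
  -- d₀ is coprime to q
  have hd₀p : ¬ p ∣ d₀.val := by
    rintro ⟨t, ht⟩
    apply hχ₀a'
    rw [← val_cast_self d₀, ht]
    have he : ((p ^ h : ℕ) : ZMod q) * ((p * t : ℕ) : ZMod q) = ((q * t : ℕ) : ZMod q) := by
      rw [hq_def]; push_cast; ring
    rw [he, Nat.cast_mul, ZMod.natCast_self, zero_mul]
  have hcop : Nat.Coprime d₀.val q := by
    show Nat.Coprime d₀.val (p ^ (h + 1))
    exact Nat.Coprime.pow_right _ (Nat.coprime_comm.mp ((Nat.Prime.coprime_iff_not_dvd hp).mpr hd₀p))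
  set u : (ZMod q)ˣ := ZMod.unitOfCoprime d₀.val hcop with hu_def
  have hu_coe : (u : ZMod q) = d₀ := by rw [hu_def, ZMod.coe_unitOfCoprime]; exact val_cast_self d₀
  set c : ℕ := ((u⁻¹ : (ZMod q)ˣ) : ZMod q).val with hc_def
  have hc : ((c : ℕ) : ZMod q) * d₀ = 1 := by
    rw [hc_def, val_cast_self, ← hu_coe, Units.inv_mul]
  -- normalized character
  set χ : A →* Multiplicative (ZMod q) := (powMonoidHom c).comp χ₀ with hχ_def
  set χ' : G →* Multiplicative (ZMod q) := χ.comp π with hχ'_def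
  have hχbA : (χ bA).toAdd = 1 := by
    rw [hχ_def, MonoidHom.comp_apply, powMonoidHom_apply, toAdd_pow, ← hd₀_def, nsmul_eq_mul, hc]
  have hχa : (χ a).toAdd = ((p ^ h : ℕ) : ZMod q) := by
    rw [← hbA, map_pow, toAdd_pow, hχbA, nsmul_eq_mul, mul_one]
  by_cases hcase : (m - (h + 1)) + h = 0 ∧ p = 2
  · -- corner case : h = 0, m = 1, p = 2
    obtain ⟨hsum, hp2⟩ := hcase
    have hh0 : h = 0 := by omega
    set K : Subgroup A := Subgroup.zpowers a ⊔ Hk 1 with hK_def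
    by_cases hKtop : K = ⊤
    · -- A is cyclic, so G is abelian: contradiction with hna
      exfalso
      set C := A ⧸ Subgroup.zpowers a with hC_def
      have hCsurj : ∀ x : C, ∃ y : C, y ^ p = x := by
        intro x
        obtain ⟨v, rfl⟩ := QuotientGroup.mk_surjective x
        have hv : v ∈ K := by rw [hKtop]; trivial
        rw [hK_def, Subgroup.mem_sup] at hv
        obtain ⟨y1, hy1, y2, hy2, hprod⟩ := hv
        obtain ⟨y3, hy3⟩ := (hHk_mem 1 y2).mp hy2
        refine ⟨QuotientGroup.mk y3, ?_⟩
        rw [← QuotientGroup.mk_pow]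
        have hy1' : (QuotientGroup.mk y1 : C) = 1 := (QuotientGroup.eq_one_iff _).mpr hy1
        have hstep : (QuotientGroup.mk (y3 ^ p) : C) = QuotientGroup.mk (y1 * y3 ^ p) := by
          rw [QuotientGroup.mk_mul, hy1', one_mul]
        rw [hstep]
        congr 1
        rw [← hprod]
        congr 1
        rw [← hy3, pow_one]
      have hiter : ∀ (K0 : ℕ) (x : C), ∃ y : C, y ^ p ^ K0 = x := by
        intro K0
        induction K0 with
        | zero => intro x; exact ⟨x, by rw [pow_zero, pow_one]⟩
        | succ n ih =>
          intro x
          obtain ⟨y, hy⟩ := hCsurj x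
          obtain ⟨y', hy'⟩ := ih y
          exact ⟨y', by rw [pow_succ, pow_mul, hy', hy]⟩
      have hC : ∀ x : C, ∃ k', x ^ p ^ k' = 1 := by
        intro x
        obtain ⟨v, rfl⟩ := QuotientGroup.mk_surjective x
        obtain ⟨k', hk'⟩ := hA v
        exact ⟨k', by rw [← QuotientGroup.mk_pow, hk']; rfl⟩
      have hCtriv : ∀ x : C, x = 1 := by
        intro x
        obtain ⟨y, hy⟩ := hiter (Nat.card C) x
        rw [← hy, pgroup_pow_card hp hC y]
      have hcycA : IsCyclic A := by
        refine ⟨⟨a, fun v => ?_⟩⟩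
        exact (QuotientGroup.eq_one_iff v).mp (hCtriv (QuotientGroup.mk v))
      apply hna
      apply commutative_of_cyclic_center_quotient π
      intro x hx
      exact hγZ ((hker x).mp hx)
    · -- there is x ∉ K : build an automorphism whose displacement escapes γ₂
      have hxex : ∃ x : A, x ∉ K := by
        by_contra hcon; push_neg at hcon
        exact hKtop ((Subgroup.eq_top_iff' K).mpr hcon)
      obtain ⟨x, hxK⟩ := hxex
      set D := A ⧸ K with hD_def
      have hexpD : ∀ yD : D, yD ^ p = 1 := by
        intro yD
        obtain ⟨v, rfl⟩ := QuotientGroup.mk_surjective yD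
        rw [← QuotientGroup.mk_pow, QuotientGroup.eq_one_iff]
        exact (le_sup_right : Hk 1 ≤ K) ((hHk_mem 1 (v ^ p)).mpr ⟨v, by rw [pow_one]⟩)
      have hDx : (QuotientGroup.mk x : D) ≠ 1 := by
        rw [ne_eq, QuotientGroup.eq_one_iff]; exact hxK
      obtain ⟨φ₁, hφ₁⟩ := sep_hom hp.pos hexpD hDx
      set κ : G →* Multiplicative (ZMod p) := (φ₁.comp (QuotientGroup.mk' K)).comp π
        with hκ_def
      have hpne : NeZero p := ⟨hp.pos.ne'⟩
      have haK : a ∈ K := (le_sup_left : Subgroup.zpowers a ≤ K) (Subgroup.mem_zpowers a)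
      have hκz' : κ z' = 1 := by
        rw [hκ_def, MonoidHom.comp_apply, MonoidHom.comp_apply, ← ha_def]
        have h1 : (QuotientGroup.mk' K) a = 1 := (QuotientGroup.eq_one_iff a).mpr haK
        rw [h1, map_one]
      have hm_eq : m = 1 := by omega
      have hz'p : z' ^ p = 1 := by
        have := pow_orderOf_eq_one z'
        rwa [hordm, hm_eq, pow_one] at this
      obtain ⟨φ, hφ⟩ := cen_monoidHom hz'Z hz'p κ
      have hinj : Function.Injective φ := by
        rw [injective_iff_map_eq_one]
        intro g hg
        rw [hφ g] at hg
        have hgw : g = (z' ^ ((κ g).toAdd.val))⁻¹ := eq_inv_of_mul_eq_one_left hg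
        have hκg : κ g = 1 := by
          rw [hgw, map_inv, map_pow, hκz', one_pow, inv_one]
        rw [hgw, hκg]
        norm_num
      set α : MulAut G := MulEquiv.ofBijective φ ((Finite.injective_iff_bijective).mp hinj)
        with hα_def
      have hαapp : ∀ g : G, α g = g * z' ^ ((κ g).toAdd.val) := fun g => hφ g
      refine ⟨α, ?_, ?_⟩
      · intro g
        rw [hαapp g, inv_mul_cancel_left]
        exact pow_mem hz'Z _
      · rintro ⟨hγ2, _⟩
        obtain ⟨g₁, hg₁⟩ := hπsurj x
        have hκg₁ : κ g₁ ≠ 1 := by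
          rw [hκ_def, MonoidHom.comp_apply, MonoidHom.comp_apply, hg₁]
          exact hφ₁
        have hd := hγ2 g₁
        rw [hαapp g₁, inv_mul_cancel_left] at hd
        have h1 : a ^ ((κ g₁).toAdd.val) = 1 := by
          rw [ha_def, ← map_pow]
          exact (hker _).mpr hd
        have hdvd := orderOf_dvd_of_pow_eq_one h1
        rw [ha_ord] at hdvd
        have hlt : ((κ g₁).toAdd.val) < p := ZMod.val_lt _
        have hne0 : ((κ g₁).toAdd.val) ≠ 0 := by
          intro h0
          apply hκg₁
          have : (κ g₁).toAdd = 0 := by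
            rw [← val_cast_self ((κ g₁).toAdd), h0, Nat.cast_zero]
          rw [← ofAdd_toAdd (κ g₁), this]
          rfl
        have := Nat.eq_zero_of_dvd_of_lt hdvd hlt
        exact hne0 this
  · -- main case
    set e : ℕ := m - (h + 1) with he_def
    have hok : e + h ≠ 0 ∨ p ≠ 2 := by tauto
    set w : G := z' ^ p ^ e with hw_def
    have hwZ : w ∈ Subgroup.center G := pow_mem hz'Z _
    have hwq : w ^ q = 1 := by
      rw [hw_def, ← pow_mul, ← pow_add]
      apply orderOf_dvd_iff_pow_eq_one.mp
      rw [hordm]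
      exact pow_dvd_pow p (by omega)
    have hndvd : ¬ p ∣ (1 + p ^ (e + h)) := by
      intro hdvd
      rcases Nat.eq_zero_or_pos (e + h) with h0 | hpos
      · rw [h0, pow_zero] at hdvd
        have h2 : p = 2 := (Nat.prime_dvd_prime_iff_eq hp Nat.prime_two).mp hdvd
        tauto
      · have h1 : p ∣ p ^ (e + h) := dvd_pow_self p hpos.ne'
        have h2 : p ∣ 1 := (Nat.dvd_add_right h1).mp (by rwa [Nat.add_comm] at hdvd)
        exact hp.one_lt.ne' (Nat.dvd_one.mp h2)
    have hunit : IsUnit ((1 + p ^ (e + h) : ℕ) : ZMod q) := by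
      rw [ZMod.isUnit_iff_coprime]
      show Nat.Coprime _ (p ^ (h + 1))
      exact Nat.Coprime.pow_right _
        (Nat.coprime_comm.mp ((Nat.Prime.coprime_iff_not_dvd hp).mpr hndvd))
    have hπw : π w = a ^ p ^ e := by rw [hw_def, map_pow, ← ha_def]
    have hχ'w : (χ' w).toAdd = ((p ^ (e + h) : ℕ) : ZMod q) := by
      rw [hχ'_def, MonoidHom.comp_apply, hπw, map_pow, toAdd_pow, hχa, nsmul_eq_mul]
      push_cast
      rw [← pow_add]
    obtain ⟨φ, hφ⟩ := cen_monoidHom hwZ hwq χ'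
    have hinj : Function.Injective φ := by
      rw [injective_iff_map_eq_one]
      intro g hg
      rw [hφ g] at hg
      set j : ℕ := ((χ' g).toAdd).val with hj_def
      have hgw : g = (w ^ j)⁻¹ := eq_inv_of_mul_eq_one_left hg
      have hjq : (j : ZMod q) = (χ' g).toAdd := val_cast_self _
      have hφg : (χ' g).toAdd = -((j : ZMod q) * ((p ^ (e + h) : ℕ) : ZMod q)) := by
        rw [hgw, map_inv, map_pow, toAdd_inv, toAdd_pow, hχ'w, nsmul_eq_mul]
      have h3 : (j : ZMod q) = -((j : ZMod q) * ((p ^ (e + h) : ℕ) : ZMod q)) :=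
        hjq.trans hφg
      have heq0 : (j : ZMod q) * ((1 + p ^ (e + h) : ℕ) : ZMod q) = 0 := by
        rw [Nat.cast_add, Nat.cast_one]
        linear_combination h3
      have hj0 : (j : ZMod q) = 0 := by
        rcases hunit with ⟨v, hv⟩
        have := congrArg (· * (v⁻¹ : (ZMod q)ˣ).val) heq0
        simpa [← hv, mul_assoc] using this
      have hjz : j = 0 := by
        have hdvd := (ZMod.natCast_eq_zero_iff j q).mp hj0
        have hlt : j < q := ZMod.val_lt _
        exact Nat.eq_zero_of_dvd_of_lt hdvd hlt
      rw [hgw, hjz, pow_zero, inv_one]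
    set α : MulAut G := MulEquiv.ofBijective φ ((Finite.injective_iff_bijective).mp hinj)
      with hα_def
    have hαapp : ∀ g : G, α g = g * w ^ ((χ' g).toAdd.val) := fun g => hφ g
    refine ⟨α, ?_, ?_⟩
    · intro g
      rw [hαapp g, inv_mul_cancel_left]
      exact pow_mem hwZ _
    · rintro ⟨hγ2, hfix⟩
      rcases le_or_gt (h + 1) m with hge | hlt
      · -- α moves the central element z'
        have hz'fix := hfix z' hz'Z
        rw [hαapp z'] at hz'fix
        have hχ'z' : (χ' z').toAdd = ((p ^ h : ℕ) : ZMod q) := by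
          rw [hχ'_def, MonoidHom.comp_apply, ← ha_def, hχa]
        rw [hχ'z'] at hz'fix
        have hvalh : (((p ^ h : ℕ) : ZMod q)).val = p ^ h :=
          ZMod.val_cast_of_lt (by
            rw [hq_def]
            exact Nat.pow_lt_pow_right hp.one_lt (Nat.lt_succ_self h))
        rw [hvalh] at hz'fix
        have hw1 : w ^ p ^ h = 1 := by
          have := mul_eq_left.mp hz'fix
          exact this
        rw [hw_def, ← pow_mul, ← pow_add] at hw1
        have hdvd := orderOf_dvd_of_pow_eq_one hw1
        rw [hordm] at hdvd
        have := (Nat.pow_dvd_pow_iff_le_right hp.one_lt).mp hdvd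
        omega
      · -- the displacement at g₀ escapes the commutator subgroup
        have he0 : e = 0 := by omega
        obtain ⟨g₀, hg₀⟩ := hπsurj bA
        have hd := hγ2 g₀
        rw [hαapp g₀, inv_mul_cancel_left] at hd
        have hχ'g₀ : (χ' g₀).toAdd = (1 : ZMod q) := by
          rw [hχ'_def, MonoidHom.comp_apply, hg₀, hχbA]
        have hfq : Fact (1 < q) := ⟨hq1⟩
        rw [hχ'g₀, ZMod.val_one, pow_one] at hd
        have hπw1 : π w = 1 := (hker w).mpr hd
        rw [hπw, he0, pow_zero, pow_one] at hπw1
        exact ha_ne hπw1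


end AuxLemmas



/-- for a finite non-abelian `p`-group `G`,
`Aut_{Z(G)}^{γ_2(G)}(G) = Autcent(G)` iff `γ_2(G) = Z(G)`. -/
theorem statement16 {p : ℕ} (hp : p.Prime) {G : Type u} [Group G] [Finite G]
    (hpG : IsPGroup p G) (hna : ¬ ∀ a b : G, a * b = b * a) :
    autMN ((⊤ : Subgroup G).lowerCentralSeries 1) (Subgroup.center G) =
      autM (Subgroup.center G) ↔
    (⊤ : Subgroup G).lowerCentralSeries 1 = Subgroup.center G := by
  have hlcs : (⊤ : Subgroup G).lowerCentralSeries 1 = commutator G := Subgroup.top_lowerCentralSeries_one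
  constructor
  · intro heq
    have hγZ : commutator G ≤ Subgroup.center G := by
      have hconj : ∀ x g : G, g⁻¹ * (MulAut.conj x) g ∈ Subgroup.center G := by
        intro x g
        have hmem : MulAut.conj x ∈ autMN ((⊤ : Subgroup G).lowerCentralSeries 1) (Subgroup.center G) := by
          rw [autMN, Subgroup.mem_inf]
          constructor
          · intro g'
            show g'⁻¹ * (x * g' * x⁻¹) ∈ (⊤ : Subgroup G).lowerCentralSeries 1
            rw [hlcs]
            have he : g'⁻¹ * (x * g' * x⁻¹) = ⁅g'⁻¹, x⁆ := by
              rw [commutatorElement_def]; group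
            rw [he, commutator_def]
            exact Subgroup.commutator_mem_commutator (Subgroup.mem_top _) (Subgroup.mem_top _)
          · intro n hn
            show x * n * x⁻¹ = n
            rw [Subgroup.mem_center_iff.mp hn x]
            group
        rw [heq] at hmem
        exact hmem g
      rw [commutator_def, Subgroup.commutator_le]
      intro g1 _ g2 _
      have hc := hconj g2 g1⁻¹
      have he : (g1⁻¹)⁻¹ * (MulAut.conj g2) g1⁻¹ = ⁅g1, g2⁆ := by
        show (g1⁻¹)⁻¹ * (g2 * g1⁻¹ * g2⁻¹) = _
        rw [commutatorElement_def]
        group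
      rwa [he] at hc
    rw [hlcs]
    apply le_antisymm hγZ
    intro z hz
    by_contra hzγ
    obtain ⟨α, hαM, hαbad⟩ := main_contra hp hpG hna hγZ hz hzγ
    apply hαbad
    have hmem : α ∈ autM (Subgroup.center G) := hαM
    rw [← heq, autMN, Subgroup.mem_inf] at hmem
    obtain ⟨h1, h2⟩ := hmem
    constructor
    · intro g
      have := h1 g
      rwa [hlcs] at this
    · exact h2
  · intro hZγ
    apply le_antisymm
    · intro f hf
      rw [autMN, Subgroup.mem_inf] at hf
      have := hf.1
      rwa [hZγ] at this
    · intro f hf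
      have hf' : ∀ g : G, g⁻¹ * f g ∈ Subgroup.center G := hf
      rw [autMN, Subgroup.mem_inf]
      constructor
      · show ∀ g : G, g⁻¹ * f g ∈ (⊤ : Subgroup G).lowerCentralSeries 1
        rw [hZγ]
        exact hf'
      · show ∀ n ∈ Subgroup.center G, f n = n
        intro n hn
        apply central_fixes_commutator f hf'
        rw [← hlcs, hZγ]
        exact hn
end
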